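/- Hölder continuity on a product from slice-wise estimates: let (Y, d) be a metric space, r₀ > 0, γ ∈ (0,1], C ≥ 0, M ≥ 0, and let u : Y × (0, r₀] → ℝ satisfy: (a) |u(y,r)| ≤ M for all y ∈ Y, r ∈ (0,r₀]; (b) |u(y₁,r) − u(y₂,r)| ≤ C·r^{γ−1}·d(y₁,y₂) for all y₁, y₂ ∈ Y and r ∈ (0,r₀]; (c) |u(y,r₁) − u(y,r₂)| ≤ C·|r₁^γ − r₂^γ| for all y ∈ Y and r₁, r₂ ∈ (0,r₀]. Then there exists C′ ≥ 0, depending only on C, γ, M, r₀, such that |u(y₁,r₁) − u(y₂,r₂)| ≤ C′·(d(y₁,y₂)^γ + |r₁ − r₂|^γ) for all y₁, y₂ ∈ Y and r₁, r₂ ∈ (0, r₀/2]; in particular u extends to a γ-Hölder continuous function on Y × [0, r₀/2]. -/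

import Mathlib

open Real Filter Topology

private lemma my_rpow_add_le {γ a b : ℝ} (h0 : 0 ≤ γ) (h1 : γ ≤ 1)
    (ha : 0 ≤ a) (hb : 0 ≤ b) : (a + b) ^ γ ≤ a ^ γ + b ^ γ := by
  have := NNReal.rpow_add_le_add_rpow (a.toNNReal) (b.toNNReal) h0 h1
  have h := NNReal.coe_le_coe.2 this
  push_cast [NNReal.coe_rpow] at h
  rwa [Real.coe_toNNReal _ ha, Real.coe_toNNReal _ hb] at h

private lemma my_abs_rpow_sub_rpow_le {γ : ℝ} (h0 : 0 ≤ γ) (h1 : γ ≤ 1)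
    {a b : ℝ} (ha : 0 ≤ a) (hb : 0 ≤ b) : |a ^ γ - b ^ γ| ≤ |a - b| ^ γ := by
  wlog hab : b ≤ a generalizing a b
  · rw [abs_sub_comm, abs_sub_comm a b]
    exact this hb ha (le_of_not_ge hab)
  have h2 : a ^ γ ≤ (a - b) ^ γ + b ^ γ := by
    calc a ^ γ = ((a - b) + b) ^ γ := by ring_nf
    _ ≤ _ := my_rpow_add_le h0 h1 (by linarith) hb
  rw [abs_of_nonneg (sub_nonneg.2 (Real.rpow_le_rpow hb hab h0)),
      abs_of_nonneg (sub_nonneg.2 hab)]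
  linarith

/-- Hölder continuity on a product from slice-wise estimates: uniform boundedness,
a Hölder-type estimate in the `Y` variable with weight `r^{γ−1}`, and a
`|r₁^γ − r₂^γ|` estimate in the radial variable together imply a joint
`γ`-Hölder estimate on `Y × (0, r₀/2]`, and `u` extends to a `γ`-Hölder continuous
function on `Y × [0, r₀/2]`. -/
theorem holder_from_slicewise_estimates
    {Y : Type*} [MetricSpace Y] (r₀ γ C M : ℝ)
    (hr₀ : 0 < r₀) (hγ : γ ∈ Set.Ioc (0:ℝ) 1) (hC : 0 ≤ C) (hM : 0 ≤ M)
    (u : Y → ℝ → ℝ)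
    (ha : ∀ y : Y, ∀ r ∈ Set.Ioc (0:ℝ) r₀, |u y r| ≤ M)
    (hb : ∀ y₁ y₂ : Y, ∀ r ∈ Set.Ioc (0:ℝ) r₀,
      |u y₁ r - u y₂ r| ≤ C * r ^ (γ - 1) * dist y₁ y₂)
    (hc : ∀ y : Y, ∀ r₁ ∈ Set.Ioc (0:ℝ) r₀, ∀ r₂ ∈ Set.Ioc (0:ℝ) r₀,
      |u y r₁ - u y r₂| ≤ C * |r₁ ^ γ - r₂ ^ γ|) :
    ∃ C' : ℝ, 0 ≤ C' ∧
      (∀ y₁ y₂ : Y, ∀ r₁ ∈ Set.Ioc (0:ℝ) (r₀/2), ∀ r₂ ∈ Set.Ioc (0:ℝ) (r₀/2),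
        |u y₁ r₁ - u y₂ r₂| ≤ C' * (dist y₁ y₂ ^ γ + |r₁ - r₂| ^ γ)) ∧
      ∃ v : Y → ℝ → ℝ,
        (∀ y : Y, ∀ r ∈ Set.Ioc (0:ℝ) (r₀/2), v y r = u y r) ∧
        (∀ y₁ y₂ : Y, ∀ r₁ ∈ Set.Icc (0:ℝ) (r₀/2), ∀ r₂ ∈ Set.Icc (0:ℝ) (r₀/2),
          |v y₁ r₁ - v y₂ r₂| ≤ C' * (dist y₁ y₂ ^ γ + |r₁ - r₂| ^ γ)) := by
  obtain ⟨hγ0, hγ1⟩ := hγ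
  have hr₀γ : (0:ℝ) < r₀ ^ γ := Real.rpow_pos_of_pos hr₀ γ
  set B : ℝ := 3 * C + 2 * M / r₀ ^ γ with hB
  have hB0 : 0 ≤ B := by positivity
  set C' : ℝ := C + B with hC'
  have hC'0 : 0 ≤ C' := by positivity
  -- membership transfer
  have hmem : ∀ r : ℝ, r ∈ Set.Ioc (0:ℝ) (r₀/2) → r ∈ Set.Ioc (0:ℝ) r₀ :=
    fun r hr => ⟨hr.1, hr.2.trans (by linarith)⟩
  -- the slice-in-y estimate at a common radius, with Hölder bound
  have step2 : ∀ y₁ y₂ : Y, ∀ r ∈ Set.Ioc (0:ℝ) (r₀/2),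
      |u y₁ r - u y₂ r| ≤ B * dist y₁ y₂ ^ γ := by
    intro y₁ y₂ r hr
    have hrI := hmem r hr
    set d := dist y₁ y₂ with hdd
    have hd : 0 ≤ d := dist_nonneg
    rcases eq_or_lt_of_le hd with hd0 | hd0
    · have h := hb y₁ y₂ r hrI
      rw [← hdd, ← hd0, mul_zero] at h
      rw [← hd0, Real.zero_rpow (ne_of_gt hγ0), mul_zero]
      exact h
    rcases le_or_gt d r with hdr | hdr
    · -- d ≤ r : use hb at radius r
      have h1 : r ^ (γ - 1) ≤ d ^ (γ - 1) :=
        Real.rpow_le_rpow_of_nonpos hd0 hdr (by linarith)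
      have h2 : d ^ (γ - 1) * d = d ^ γ := by
        rw [← Real.rpow_add_one (ne_of_gt hd0) (γ - 1)]; ring_nf
      calc |u y₁ r - u y₂ r| ≤ C * r ^ (γ - 1) * d := hb y₁ y₂ r hrI
      _ ≤ C * d ^ (γ - 1) * d := by
          have := mul_le_mul_of_nonneg_left h1 hC
          exact mul_le_mul_of_nonneg_right this hd
      _ = C * d ^ γ := by rw [mul_assoc, h2]
      _ ≤ B * d ^ γ := by
          apply mul_le_mul_of_nonneg_right _ (Real.rpow_nonneg hd γ)
          have h5 : 0 ≤ 2 * M / r₀ ^ γ := by positivity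
          rw [hB]; linarith
    rcases le_or_gt d r₀ with hdR | hdR
    · -- r < d ≤ r₀ : move to radius d
      have hdI : d ∈ Set.Ioc (0:ℝ) r₀ := ⟨hd0, hdR⟩
      have hA : |u y₁ r - u y₁ d| ≤ C * d ^ γ := by
        refine (hc y₁ r hrI d hdI).trans ?_
        apply mul_le_mul_of_nonneg_left _ hC
        have h1 : r ^ γ ≤ d ^ γ := Real.rpow_le_rpow (le_of_lt hrI.1) hdr.le hγ0.le
        have h2 : 0 ≤ r ^ γ := Real.rpow_nonneg (le_of_lt hrI.1) γ
        rw [abs_of_nonpos (by linarith)]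
        linarith
      have hBm : |u y₁ d - u y₂ d| ≤ C * d ^ γ := by
        refine (hb y₁ y₂ d hdI).trans ?_
        have h2 : d ^ (γ - 1) * d = d ^ γ := by
          rw [← Real.rpow_add_one (ne_of_gt hd0) (γ - 1)]; ring_nf
        rw [mul_assoc, h2]
      have hCm : |u y₂ d - u y₂ r| ≤ C * d ^ γ := by
        refine (hc y₂ d hdI r hrI).trans ?_
        apply mul_le_mul_of_nonneg_left _ hC
        have h1 : r ^ γ ≤ d ^ γ := Real.rpow_le_rpow (le_of_lt hrI.1) hdr.le hγ0.le
        have h2 : 0 ≤ r ^ γ := Real.rpow_nonneg (le_of_lt hrI.1) γ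
        rw [abs_of_nonneg (by linarith)]
        linarith
      calc |u y₁ r - u y₂ r|
          ≤ |u y₁ r - u y₁ d| + |u y₁ d - u y₂ d| + |u y₂ d - u y₂ r| := by
            have := abs_sub_le (u y₁ r) (u y₁ d) (u y₂ r)
            have := abs_sub_le (u y₁ d) (u y₂ d) (u y₂ r)
            linarith [abs_sub_le (u y₁ r) (u y₁ d) (u y₂ r),
              abs_sub_le (u y₁ d) (u y₂ d) (u y₂ r)]
      _ ≤ C * d ^ γ + C * d ^ γ + C * d ^ γ := by linarith
      _ = 3 * C * d ^ γ := by ring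
      _ ≤ B * d ^ γ := by
          apply mul_le_mul_of_nonneg_right _ (Real.rpow_nonneg hd γ)
          have h5 : 0 ≤ 2 * M / r₀ ^ γ := by positivity
          rw [hB]; linarith
    · -- r₀ < d : use boundedness
      have h1 : r₀ ^ γ ≤ d ^ γ := Real.rpow_le_rpow hr₀.le hdR.le hγ0.le
      calc |u y₁ r - u y₂ r| ≤ |u y₁ r| + |u y₂ r| := abs_sub _ _
      _ ≤ M + M := add_le_add (ha y₁ r hrI) (ha y₂ r hrI)
      _ = 2 * M / r₀ ^ γ * r₀ ^ γ := by field_simp; ring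
      _ ≤ 2 * M / r₀ ^ γ * d ^ γ := by
          apply mul_le_mul_of_nonneg_left h1; positivity
      _ ≤ B * d ^ γ := by
          apply mul_le_mul_of_nonneg_right _ (Real.rpow_nonneg hd γ)
          rw [hB]; nlinarith
  -- the key joint estimate
  have key : ∀ y₁ y₂ : Y, ∀ r₁ ∈ Set.Ioc (0:ℝ) (r₀/2), ∀ r₂ ∈ Set.Ioc (0:ℝ) (r₀/2),
      |u y₁ r₁ - u y₂ r₂| ≤ C' * (dist y₁ y₂ ^ γ + |r₁ - r₂| ^ γ) := by
    intro y₁ y₂ r₁ hr₁ r₂ hr₂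
    have step1 : |u y₁ r₁ - u y₁ r₂| ≤ C * |r₁ - r₂| ^ γ := by
      refine (hc y₁ r₁ (hmem _ hr₁) r₂ (hmem _ hr₂)).trans ?_
      exact mul_le_mul_of_nonneg_left
        (my_abs_rpow_sub_rpow_le hγ0.le hγ1 hr₁.1.le hr₂.1.le) hC
    have s2 := step2 y₁ y₂ r₂ hr₂
    have hpow1 : 0 ≤ dist y₁ y₂ ^ γ := Real.rpow_nonneg dist_nonneg γ
    have hpow2 : 0 ≤ |r₁ - r₂| ^ γ := Real.rpow_nonneg (abs_nonneg _) γ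
    calc |u y₁ r₁ - u y₂ r₂| ≤ |u y₁ r₁ - u y₁ r₂| + |u y₁ r₂ - u y₂ r₂| :=
          abs_sub_le _ _ _
    _ ≤ C * |r₁ - r₂| ^ γ + B * dist y₁ y₂ ^ γ := add_le_add step1 s2
    _ ≤ C' * (dist y₁ y₂ ^ γ + |r₁ - r₂| ^ γ) := by
        rw [hC']; nlinarith
  -- the approximating sequence and limit at r = 0
  set a : ℕ → ℝ := fun n => r₀ / 2 * (1 / (n + 1)) with haDef
  have haMem : ∀ n, a n ∈ Set.Ioc (0:ℝ) (r₀/2) := by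
    intro n
    constructor
    · apply mul_pos (by linarith)
      positivity
    · rw [haDef]
      have h1 : (1:ℝ) / (n + 1) ≤ 1 := by
        rw [div_le_one (by positivity)]
        simp [Nat.cast_nonneg]
      nlinarith
  have haTend : Tendsto a atTop (𝓝 0) := by
    have h := tendsto_one_div_add_atTop_nhds_zero_nat (𝕜 := ℝ)
    have := h.const_mul (r₀ / 2)
    simpa [haDef] using this
  have hmono : ∀ N n : ℕ, N ≤ n → a n ≤ a N := by
    intro N n hNn
    apply mul_le_mul_of_nonneg_left _ (by linarith : (0:ℝ) ≤ r₀ / 2)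
    apply one_div_le_one_div_of_le (by positivity)
    have : (N:ℝ) ≤ n := Nat.cast_le.2 hNn
    linarith
  have hcau : ∀ y : Y, ∃ l : ℝ, Tendsto (fun n => u y (a n)) atTop (𝓝 l) := by
    intro y
    apply cauchySeq_tendsto_of_complete
    apply cauchySeq_of_le_tendsto_0 (fun N => 2 * C * a N ^ γ)
    · intro n m N hn hm
      have hme : ∀ k, a k ∈ Set.Ioc (0:ℝ) r₀ := fun k => hmem _ (haMem k)
      have h1 : |u y (a n) - u y (a m)| ≤ C * |a n ^ γ - a m ^ γ| :=
        hc y (a n) (hme n) (a m) (hme m)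
      have hn' : a n ^ γ ≤ a N ^ γ :=
        Real.rpow_le_rpow (haMem n).1.le (hmono N n hn) hγ0.le
      have hm' : a m ^ γ ≤ a N ^ γ :=
        Real.rpow_le_rpow (haMem m).1.le (hmono N m hm) hγ0.le
      have hn0 : 0 ≤ a n ^ γ := Real.rpow_nonneg (haMem n).1.le γ
      have hm0 : 0 ≤ a m ^ γ := Real.rpow_nonneg (haMem m).1.le γ
      have h2 : |a n ^ γ - a m ^ γ| ≤ 2 * a N ^ γ := by
        rw [abs_sub_le_iff]; constructor <;> linarith
      calc dist (u y (a n)) (u y (a m)) = |u y (a n) - u y (a m)| := Real.dist_eq _ _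
      _ ≤ C * |a n ^ γ - a m ^ γ| := h1
      _ ≤ C * (2 * a N ^ γ) := mul_le_mul_of_nonneg_left h2 hC
      _ = 2 * C * a N ^ γ := by ring
    · have h1 : Tendsto (fun N => a N ^ γ) atTop (𝓝 ((0:ℝ) ^ γ)) :=
        haTend.rpow_const (Or.inr hγ0.le)
      rw [Real.zero_rpow (ne_of_gt hγ0)] at h1
      have := h1.const_mul (2 * C)
      simpa using this
  choose L hL using hcau
  set v : Y → ℝ → ℝ := fun y r => if r = 0 then L y else u y r with hv
  have hveq : ∀ y : Y, ∀ r ∈ Set.Ioc (0:ℝ) (r₀/2), v y r = u y r := by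
    intro y r hr
    simp [hv, ne_of_gt hr.1]
  refine ⟨C', hC'0, key, v, hveq, ?_⟩
  intro y₁ y₂ r₁ hr₁ r₂ hr₂
  rcases eq_or_lt_of_le hr₁.1 with h1 | h1 <;> rcases eq_or_lt_of_le hr₂.1 with h2 | h2
  · -- both zero
    rw [← h1, ← h2]
    simp only [hv, if_pos rfl]
    apply le_of_tendsto' (((hL y₁).sub (hL y₂)).abs)
    intro n
    have := key y₁ y₂ (a n) (haMem n) (a n) (haMem n)
    simpa using this
  · -- r₁ = 0, r₂ > 0
    rw [← h1]
    simp only [hv, if_pos rfl, if_neg (ne_of_gt h2)]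
    have hF : Tendsto (fun n => |u y₁ (a n) - u y₂ r₂|) atTop
        (𝓝 |L y₁ - u y₂ r₂|) := (((hL y₁).sub_const _).abs)
    have hG : Tendsto (fun n => C' * (dist y₁ y₂ ^ γ + |a n - r₂| ^ γ)) atTop
        (𝓝 (C' * (dist y₁ y₂ ^ γ + |(0:ℝ) - r₂| ^ γ))) := by
      have h3 : Tendsto (fun n => |a n - r₂|) atTop (𝓝 |(0:ℝ) - r₂|) :=
        ((haTend.sub_const r₂).abs)
      have h4 := h3.rpow_const (Or.inr hγ0.le)
      exact (h4.const_add _).const_mul _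
    exact le_of_tendsto_of_tendsto' hF hG
      (fun n => key y₁ y₂ (a n) (haMem n) r₂ ⟨h2, hr₂.2⟩)
  · -- r₁ > 0, r₂ = 0
    rw [← h2]
    simp only [hv, if_pos rfl, if_neg (ne_of_gt h1)]
    have hF : Tendsto (fun n => |u y₁ r₁ - u y₂ (a n)|) atTop
        (𝓝 |u y₁ r₁ - L y₂|) := ((hL y₂).const_sub _).abs
    have hG : Tendsto (fun n => C' * (dist y₁ y₂ ^ γ + |r₁ - a n| ^ γ)) atTop
        (𝓝 (C' * (dist y₁ y₂ ^ γ + |r₁ - (0:ℝ)| ^ γ))) := by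
      have h3 : Tendsto (fun n => |r₁ - a n|) atTop (𝓝 |r₁ - (0:ℝ)|) :=
        ((haTend.const_sub r₁).abs)
      have h4 := h3.rpow_const (Or.inr hγ0.le)
      exact (h4.const_add _).const_mul _
    exact le_of_tendsto_of_tendsto' hF hG
      (fun n => key y₁ y₂ r₁ ⟨h1, hr₁.2⟩ (a n) (haMem n))
  · -- both positive
    simp only [hv, if_neg (ne_of_gt h1), if_neg (ne_of_gt h2)]
    exact key y₁ y₂ r₁ ⟨h1, hr₁.2⟩ r₂ ⟨h2, hr₂.2⟩
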